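/- Define the Sierpiński coloring s : [ℝ]² → {0,1} using a well-ordering <_wo of ℝ by s({x,y}) = 0 iff <_wo and the usual order < agree on {x,y}. Then every subset Y of ℝ on which s is constant on [Y]² is either well-ordered or reverse well-ordered by the usual order <; in particular no such Y contains a subset order-isomorphic to the integers ℤ. -/
import Mathlib

/- STATEMENT 1: Sierpiński coloring. If `r` is a well-ordering of ℝ and the
Sierpiński coloring (color 0 iff `r` agrees with `<` on the pair) is constant
on the pairs from `Y ⊆ ℝ`, then `Y` is well-ordered or reverse well-ordered by
the usual order; in particular `Y` contains no subset order-isomorphic to ℤ. -/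
theorem stmt_1 (r : ℝ → ℝ → Prop) (hr : IsWellOrder ℝ r) (Y : Set ℝ)
    (hconst : (∀ x ∈ Y, ∀ y ∈ Y, x ≠ y → (r x y ↔ x < y)) ∨
              (∀ x ∈ Y, ∀ y ∈ Y, x ≠ y → ¬(r x y ↔ x < y))) :
    (Y.WellFoundedOn (· < ·) ∨ Y.WellFoundedOn (· > ·)) ∧
      ¬ ∃ f : ℤ → ℝ, StrictMono f ∧ Set.range f ⊆ Y := by
  have hrwf : WellFounded (fun a b : Y => r a b) := InvImage.wf Subtype.val hr.wf
  have hwf : Y.WellFoundedOn (· < ·) ∨ Y.WellFoundedOn (· > ·) := by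
    rcases hconst with hc | hc
    · left
      exact Subrelation.wf (fun {a b} hab =>
        (hc a.1 a.2 b.1 b.2 (ne_of_lt hab)).mpr hab) hrwf
    · right
      refine Subrelation.wf (fun {a b} hab => ?_) hrwf
      have hne : a.1 ≠ b.1 := ne_of_gt hab
      have h := hc a.1 a.2 b.1 b.2 hne
      by_contra hrab
      exact h ⟨fun h' => absurd h' hrab,
        fun h' => absurd h' (not_lt_of_gt hab)⟩
  refine ⟨hwf, ?_⟩
  rintro ⟨f, hf, hrange⟩
  rcases hwf with h | h
  · rw [Set.wellFoundedOn_iff_no_descending_seq] at h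
    have hinj : Function.Injective (fun n : ℕ => f (-(n : ℤ))) := by
      intro a b hab
      have := hf.injective hab
      omega
    refine h ⟨⟨fun n : ℕ => f (-(n : ℤ)), hinj⟩, ?_⟩ fun n => hrange ⟨-(n : ℤ), rfl⟩
    intro a b
    simp only [Function.Embedding.coeFn_mk, hf.lt_iff_lt, gt_iff_lt]
    omega
  · rw [Set.wellFoundedOn_iff_no_descending_seq] at h
    have hinj : Function.Injective (fun n : ℕ => f (n : ℤ)) := by
      intro a b hab
      have := hf.injective hab
      omega
    refine h ⟨⟨fun n : ℕ => f (n : ℤ), hinj⟩, ?_⟩ fun n => hrange ⟨(n : ℤ), rfl⟩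
    intro a b
    simp only [Function.Embedding.coeFn_mk, gt_iff_lt, hf.lt_iff_lt]
    omega
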